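/- Let H be a simple graph with chromatic number r + 1 where r ≥ 3. Then there exists a positive integer g such that there is no graph homomorphism from H to the join K_{r−2} + C_{2g+1}. -/

import Mathlib

open SimpleGraph

/-- The join of two simple graphs: disjoint union plus all edges in between. -/
def Join {α β : Type*} (G : SimpleGraph α) (H : SimpleGraph β) : SimpleGraph (α ⊕ β) where
  Adj x y :=
    Sum.elim (fun a => Sum.elim (fun b => G.Adj a b) (fun _ => True) y)
      (fun a => Sum.elim (fun _ => True) (fun b => H.Adj a b) y) x
  symm := by
    constructor
    rintro (a | a) (b | b) h <;>
      first
        | exact trivial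
        | exact G.adj_symm h
        | exact H.adj_symm h
  loopless := by
    constructor
    rintro (a | a) h
    · exact G.loopless.irrefl a h
    · exact H.loopless.irrefl a h

/-- If `H` has chromatic number `r + 1` with `r ≥ 3`, then there is a positive integer `g`
such that `H` is not homomorphic to `K_{r-2} + C_{2g+1}`. -/
theorem statement11 {α : Type*} [Fintype α] (r : ℕ) (hr : 3 ≤ r) (H : SimpleGraph α)
    (hchi : H.chromaticNumber = (r + 1 : ℕ)) :
    ∃ g : ℕ, 0 < g ∧
      IsEmpty (H →g Join (completeGraph (Fin (r - 2))) (cycleGraph (2 * g + 1))) := by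
  set g := Fintype.card α + 1 with hg
  refine ⟨g, Nat.succ_pos _, ⟨fun f => ?_⟩⟩
  set N := 2 * g + 1 with hN
  -- find a cycle vertex not in the image of f
  have hmiss : ∃ m : Fin N, ∀ v : α, f v ≠ Sum.inr m := by
    by_contra h
    push_neg at h
    choose v hv using h
    have hinj : Function.Injective v := by
      intro m m' he
      have : (Sum.inr m : Fin (r-2) ⊕ Fin N) = Sum.inr m' := by
        rw [← hv m, ← hv m', he]
      exact Sum.inr.inj this
    have := Fintype.card_le_of_injective v hinj
    simp only [Fintype.card_fin] at this
    omega
  obtain ⟨m, hm⟩ := hmiss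
  -- build an r-coloring of H
  have hr2 : r - 2 < r := by omega
  have hcol : H.Colorable r := by
    set col : Fin (r - 2) ⊕ Fin N → Fin r :=
      Sum.elim (fun a => (⟨a.val, lt_trans a.isLt hr2⟩ : Fin r))
        (fun b => (⟨r - 2 + (b - m).val % 2, by omega⟩ : Fin r)) with hcoldef
    refine ⟨Coloring.mk (fun v => col (f v)) ?_⟩
    intro v w hvw heq0
    have hadj := f.map_adj hvw
    have heq : col (f v) = col (f w) := heq0
    clear heq0
    rcases hfv : f v with a | b <;> rcases hfw : f w with a' | b' <;>
        rw [hfv, hfw] at hadj heq <;>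
        simp only [Join, Sum.elim_inl, Sum.elim_inr, hcoldef, completeGraph,
          top_adj] at hadj heq
    · -- both in K_{r-2}
      have h := congrArg Fin.val heq
      simp only at h
      exact hadj (Fin.ext h)
    · have := congrArg Fin.val heq
      simp only at this
      have := a.isLt
      omega
    · have := congrArg Fin.val heq
      simp only at this
      have := a'.isLt
      omega
    · -- both in the cycle
      have hb : b ≠ m := fun h => hm v (h ▸ hfv)
      have hb' : b' ≠ m := fun h => hm w (h ▸ hfw)
      rw [cycleGraph_adj'] at hadj
      have hval : r - 2 + (b - m).val % 2 = r - 2 + (b' - m).val % 2 :=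
        congrArg Fin.val heq
      have hpar : (b - m).val % 2 = (b' - m).val % 2 := by omega
      have hNge : 2 ≤ N := by omega
      have key : ∀ x y : Fin N, x ≠ 0 → y ≠ 0 → (y - x).val = 1 →
          y.val = x.val + 1 := by
        intro x y hx hy hxy
        have h1 : y - x = 1 := by
          apply Fin.ext
          rw [hxy]
          simp [Fin.val_one', Nat.mod_eq_of_lt hNge]
        have h2 : y = x + 1 := by
          rw [← h1]; haveI : NeZero N := ⟨by omega⟩; open Fin.CommRing in ring
        have hval1 : ((1 : Fin N) : ℕ) = 1 := by
          simp [Fin.val_one', Nat.mod_eq_of_lt hNge]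
        have hadd : y.val = (x.val + 1) % N := by
          rw [h2, Fin.add_def, hval1]
        rcases Nat.lt_or_ge (x.val + 1) N with hlt | hge
        · rw [hadd, Nat.mod_eq_of_lt hlt]
        · exfalso
          have hx1 : x.val + 1 = N := by have := x.isLt; omega
          apply hy
          apply Fin.ext
          rw [hadd, hx1, Nat.mod_self]
          rfl
      rcases hadj with h1 | h1
      · -- (b - b').val = 1, so (b-m) = (b'-m) + 1
        have : (b - m) - (b' - m) = b - b' := by haveI : NeZero N := ⟨by omega⟩; open Fin.CommRing in ring
        have h2 : ((b - m) - (b' - m)).val = 1 := by rw [this]; exact h1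
        have := key (b' - m) (b - m) (fun h => hb' (by rwa [sub_eq_zero] at h))
          (fun h => hb (by rwa [sub_eq_zero] at h)) h2
        omega
      · have : (b' - m) - (b - m) = b' - b := by haveI : NeZero N := ⟨by omega⟩; open Fin.CommRing in ring
        have h2 : ((b' - m) - (b - m)).val = 1 := by rw [this]; exact h1
        have := key (b - m) (b' - m) (fun h => hb (by rwa [sub_eq_zero] at h))
          (fun h => hb' (by rwa [sub_eq_zero] at h)) h2
        omega
  have := hcol.chromaticNumber_le
  rw [hchi] at this
  exact absurd this (by exact_mod_cast Nat.not_succ_le_self r)
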